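/- Let θ > 0. For every τ ∈ ℝ and all t, s ∈ ℝ with |t − s| ≤ θ one has |X(t+τ, s+τ) − X(t,s)| ≤ √q · θ · exp(2|A|_∞ θ) · sup_{u∈ℝ}|A(u+τ) − A(u)|. -/

import Mathlib

open scoped Matrix
open MeasureTheory Filter

attribute [local instance] Matrix.frobeniusSeminormedAddCommGroup
  Matrix.frobeniusNormedAddCommGroup Matrix.frobeniusNormedSpace
  Matrix.frobeniusNormedRing Matrix.frobeniusNormedAlgebra Matrix.frobeniusIsBoundedSMul

noncomputable section

abbrev Mat (q : ℕ) := Matrix (Fin q) (Fin q) ℂ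

/-- Two-sided Grönwall inequality on the unordered interval. -/
lemma gronwall_uIcc {E : Type*} [NormedAddCommGroup E] [NormedSpace ℝ E]
    {f f' : ℝ → E} {K ε : ℝ} {s t : ℝ}
    (hf : ∀ u ∈ Set.uIcc s t, HasDerivAt f (f' u) u)
    (hb : ∀ u ∈ Set.uIcc s t, ‖f' u‖ ≤ K * ‖f u‖ + ε) :
    ‖f t‖ ≤ gronwallBound ‖f s‖ K ε |t - s| := by
  rcases le_total s t with h | h
  · rw [Set.uIcc_of_le h] at hf hb
    have := norm_le_gronwallBound_of_norm_deriv_right_le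
      (f := f) (f' := f') (a := s) (b := t)
      (fun u hu => (hf u hu).continuousAt.continuousWithinAt)
      (fun u hu => (hf u (Set.Ico_subset_Icc_self hu)).hasDerivWithinAt)
      le_rfl (fun u hu => hb u (Set.Ico_subset_Icc_self hu)) t ⟨h, le_rfl⟩
    rwa [abs_of_nonneg (sub_nonneg.2 h)]
  · rw [Set.uIcc_of_ge h] at hf hb
    set g : ℝ → E := fun u => f (s + t - u) with hg
    have hmem : ∀ u ∈ Set.Icc t s, s + t - u ∈ Set.Icc t s := by
      intro u hu
      constructor <;> [linarith [hu.2]; linarith [hu.1]]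
    have hg' : ∀ u ∈ Set.Icc t s, HasDerivAt g (-(f' (s + t - u))) u := by
      intro u hu
      have h1 : HasDerivAt (fun u : ℝ => s + t - u) (-1) u :=
        (hasDerivAt_id u).const_sub (s + t)
      have := (hf _ (hmem u hu)).scomp u h1
      simpa [hg, Function.comp_def] using this
    have := norm_le_gronwallBound_of_norm_deriv_right_le
      (f := g) (f' := fun u => -(f' (s + t - u))) (a := t) (b := s) (δ := ‖f s‖)
      (fun u hu => (hg' u hu).continuousAt.continuousWithinAt)
      (fun u hu => (hg' u (Set.Ico_subset_Icc_self hu)).hasDerivWithinAt)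
      (by simp [hg]) (fun u hu => by
        simpa using hb _ (hmem u (Set.Ico_subset_Icc_self hu))) s ⟨h, le_rfl⟩
    have hgs : g s = f t := by simp [hg]
    have hgt : g t = f s := by simp [hg]
    rw [hgs] at this
    rwa [abs_of_nonpos (sub_nonpos.2 h), neg_sub]

lemma gronwallBound_zero_le {K ε x : ℝ} (hK : 0 ≤ K) (hε : 0 ≤ ε) (hx : 0 ≤ x) :
    gronwallBound 0 K ε x ≤ ε * x * Real.exp (K * x) := by
  rcases eq_or_lt_of_le hK with hK0 | hKpos
  · rw [← hK0, gronwallBound_K0]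
    simp
  · rw [gronwallBound_of_K_ne_0 (ne_of_gt hKpos)]
    have key : Real.exp (K * x) - 1 ≤ K * x * Real.exp (K * x) := by
      have h1 : -(K * x) + 1 ≤ Real.exp (-(K * x)) := Real.add_one_le_exp _
      have h2 : Real.exp (-(K * x)) * Real.exp (K * x) = 1 := by
        rw [← Real.exp_add]; simp
      nlinarith [Real.exp_pos (K * x)]
    have : ε / K * (Real.exp (K * x) - 1) ≤ ε / K * (K * x * Real.exp (K * x)) := by
      apply mul_le_mul_of_nonneg_left key (div_nonneg hε hK)
    calc 0 * Real.exp (K * x) + ε / K * (Real.exp (K * x) - 1)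
        ≤ ε / K * (K * x * Real.exp (K * x)) := by simpa using this
      _ = ε * x * Real.exp (K * x) := by field_simp

/-- for the fundamental matrix `X(t,s) = X(t) X(s)⁻¹` of `x' = A(t)x` and
`|t - s| ≤ θ`, the translate satisfies
`‖X(t+τ, s+τ) − X(t,s)‖ ≤ √q · θ · exp(2‖A‖_∞ θ) · sup_u ‖A(u+τ) − A(u)‖`. -/
theorem translation_bound_of_fundamental_matrix {q : ℕ} (hq : 1 ≤ q)
    (A : ℝ → Mat q) (hAcont : Continuous A) (hAbdd : ∃ C : ℝ, ∀ t : ℝ, ‖A t‖ ≤ C)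
    (X : ℝ → Mat q) (hX : ∀ t : ℝ, HasDerivAt X (A t * X t) t)
    (hXinv : ∀ t : ℝ, IsUnit (X t))
    (θ : ℝ) (hθ : 0 < θ) :
    ∀ τ t s : ℝ, |t - s| ≤ θ →
      ‖X (t + τ) * (X (s + τ))⁻¹ - X t * (X s)⁻¹‖ ≤
        Real.sqrt q * θ * Real.exp (2 * (⨆ u : ℝ, ‖A u‖) * θ) *
          ⨆ u : ℝ, ‖A (u + τ) - A u‖ := by
  obtain ⟨C, hC⟩ := hAbdd
  intro τ t s hts
  set K : ℝ := ⨆ u : ℝ, ‖A u‖ with hKdef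
  set δ : ℝ := ⨆ u : ℝ, ‖A (u + τ) - A u‖ with hδdef
  have hbddK : BddAbove (Set.range fun u : ℝ => ‖A u‖) := ⟨C, by rintro _ ⟨u, rfl⟩; exact hC u⟩
  have hbddδ : BddAbove (Set.range fun u : ℝ => ‖A (u + τ) - A u‖) :=
    ⟨2 * C, by rintro _ ⟨u, rfl⟩
               calc ‖A (u + τ) - A u‖ ≤ ‖A (u + τ)‖ + ‖A u‖ := norm_sub_le _ _
                 _ ≤ 2 * C := by linarith [hC (u + τ), hC u]⟩
  have hAK : ∀ u : ℝ, ‖A u‖ ≤ K := fun u => le_ciSup hbddK u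
  have hAδ : ∀ u : ℝ, ‖A (u + τ) - A u‖ ≤ δ := fun u => le_ciSup hbddδ u
  have hK0 : 0 ≤ K := le_trans (norm_nonneg _) (hAK 0)
  have hδ0 : 0 ≤ δ := le_trans (norm_nonneg _) (hAδ 0)
  -- the two flows
  set Z : ℝ → Mat q := fun u => X u * (X s)⁻¹ with hZdef
  set Y : ℝ → Mat q := fun u => X (u + τ) * (X (s + τ))⁻¹ with hYdef
  have hZ' : ∀ u : ℝ, HasDerivAt Z (A u * Z u) u := by
    intro u
    have := (hX u).mul_const ((X s)⁻¹)
    rw [mul_assoc] at this; exact this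
  have hY' : ∀ u : ℝ, HasDerivAt Y (A (u + τ) * Y u) u := by
    intro u
    have hshift : HasDerivAt (fun u : ℝ => u + τ) 1 u := (hasDerivAt_id u).add_const τ
    have h1 : HasDerivAt (fun u : ℝ => X (u + τ)) (A (u + τ) * X (u + τ)) u := by
      have := (hX (u + τ)).scomp u hshift
      rw [one_smul] at this; exact this
    have := h1.mul_const ((X (s + τ))⁻¹)
    rw [mul_assoc] at this; exact this
  have hYs : Y s = 1 := by
    rw [hYdef]
    exact Matrix.mul_nonsing_inv _ ((Matrix.isUnit_iff_isUnit_det _).mp (hXinv (s + τ)))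
  have hZs : Z s = 1 := by
    rw [hZdef]
    exact Matrix.mul_nonsing_inv _ ((Matrix.isUnit_iff_isUnit_det _).mp (hXinv s))
  have hnorm1 : ‖(1 : Mat q)‖ = Real.sqrt q := by
    have h1 : ‖(1 : Mat q)‖₊ = NNReal.sqrt (Fintype.card (Fin q)) * ‖(1 : ℂ)‖₊ :=
      Matrix.frobenius_nnnorm_one
    have h2 : ‖(1 : Mat q)‖ = ((NNReal.sqrt q : NNReal) : ℝ) := by
      rw [← coe_nnnorm, h1]; simp
    rw [h2, Real.coe_sqrt]; norm_num
  -- bound on Y on the interval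
  have hYbound : ∀ u ∈ Set.uIcc s t, ‖Y u‖ ≤ Real.sqrt q * Real.exp (K * θ) := by
    intro u hu
    have hsub : Set.uIcc s u ⊆ Set.uIcc s t := Set.uIcc_subset_uIcc_left hu
    have := gronwall_uIcc (f := Y) (f' := fun u => A (u + τ) * Y u) (K := K) (ε := 0)
      (s := s) (t := u) (fun v _ => hY' v)
      (fun v _ => by
        calc ‖A (v + τ) * Y v‖ ≤ ‖A (v + τ)‖ * ‖Y v‖ := norm_mul_le _ _
          _ ≤ K * ‖Y v‖ + 0 := by
              have := mul_le_mul_of_nonneg_right (hAK (v + τ)) (norm_nonneg (Y v))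
              linarith)
    rw [gronwallBound_ε0, hYs, hnorm1] at this
    refine this.trans ?_
    apply mul_le_mul_of_nonneg_left _ (Real.sqrt_nonneg _)
    apply Real.exp_le_exp.2
    apply mul_le_mul_of_nonneg_left _ hK0
    calc |u - s| ≤ |t - s| := by
          rcases le_total s t with h | h
          · rw [Set.uIcc_of_le h] at hu
            rw [abs_of_nonneg (by linarith [hu.1]), abs_of_nonneg (by linarith)]
            linarith [hu.2]
          · rw [Set.uIcc_of_ge h] at hu
            rw [abs_of_nonpos (by linarith [hu.2]), abs_of_nonpos (by linarith)]
            linarith [hu.1]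
      _ ≤ θ := hts
  -- the difference
  set D : ℝ → Mat q := fun u => Y u - Z u with hDdef
  set ε : ℝ := δ * (Real.sqrt q * Real.exp (K * θ)) with hεdef
  have hε0 : 0 ≤ ε := mul_nonneg hδ0 (mul_nonneg (Real.sqrt_nonneg _) (Real.exp_pos _).le)
  have hD' : ∀ u : ℝ, HasDerivAt D (A u * D u + (A (u + τ) - A u) * Y u) u := by
    intro u
    have := (hY' u).sub (hZ' u)
    have e : A u * D u + (A (u + τ) - A u) * Y u = A (u + τ) * Y u - A u * Z u := by
      simp only [hDdef]
      noncomm_ring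
    rw [e]; exact this
  have hDbound : ∀ u ∈ Set.uIcc s t,
      ‖A u * D u + (A (u + τ) - A u) * Y u‖ ≤ K * ‖D u‖ + ε := by
    intro u hu
    calc ‖A u * D u + (A (u + τ) - A u) * Y u‖
        ≤ ‖A u * D u‖ + ‖(A (u + τ) - A u) * Y u‖ := norm_add_le _ _
      _ ≤ ‖A u‖ * ‖D u‖ + ‖A (u + τ) - A u‖ * ‖Y u‖ :=
          add_le_add (norm_mul_le _ _) (norm_mul_le _ _)
      _ ≤ K * ‖D u‖ + ε := by
          apply add_le_add
          · exact mul_le_mul_of_nonneg_right (hAK u) (norm_nonneg _)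
          · rw [hεdef]
            exact mul_le_mul (hAδ u) (hYbound u hu) (norm_nonneg _) hδ0
  have hgron := gronwall_uIcc (f := D) (f' := fun u => A u * D u + (A (u + τ) - A u) * Y u)
    (K := K) (ε := ε) (s := s) (t := t) (fun u _ => hD' u) hDbound
  have hDs : ‖D s‖ = 0 := by simp [hDdef, hYs, hZs]
  rw [hDs] at hgron
  have habs : (0:ℝ) ≤ |t - s| := abs_nonneg _
  have h1 : gronwallBound 0 K ε |t - s| ≤ ε * |t - s| * Real.exp (K * |t - s|) :=
    gronwallBound_zero_le hK0 hε0 habs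
  have h2 : ε * |t - s| * Real.exp (K * |t - s|) ≤ ε * θ * Real.exp (K * θ) := by
    apply mul_le_mul (mul_le_mul_of_nonneg_left hts hε0)
      (Real.exp_le_exp.2 (mul_le_mul_of_nonneg_left hts hK0)) (Real.exp_pos _).le
      (mul_nonneg hε0 hθ.le)
  have hfinal : ‖D t‖ ≤ ε * θ * Real.exp (K * θ) := hgron.trans (h1.trans h2)
  have heq : ε * θ * Real.exp (K * θ) =
      Real.sqrt q * θ * Real.exp (2 * K * θ) * δ := by
    rw [hεdef]
    rw [show (2:ℝ) * K * θ = K * θ + K * θ by ring, Real.exp_add]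
    ring
  calc ‖X (t + τ) * (X (s + τ))⁻¹ - X t * (X s)⁻¹‖ = ‖D t‖ := rfl
    _ ≤ ε * θ * Real.exp (K * θ) := hfinal
    _ = Real.sqrt q * θ * Real.exp (2 * K * θ) * δ := heq
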